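/- Let Γ be an anti-unitary involution on 𝔥, P a basis projection, 𝔮 a closed Γ-invariant subspace with P𝔮 and P(𝔮^⊥) dense in 𝔭 = P𝔥, and let S, T be the Tomita operators of (M(𝔮), Ω) and (M(𝔮^⊥), Ω) respectively in the Fock representation. Then for q ∈ 𝔮 and q^⊥ ∈ 𝔮^⊥: S(Pq) = PΓq and T(Pq^⊥) = PΓq^⊥ = −S*(Pq^⊥). -/

import Mathlib

open scoped ComplexInnerProductSpace

set_option linter.unusedSectionVars false
set_option linter.unusedVariables false

open ContinuousLinearMap

namespace TomitaAux

variable {E : Type*} [NormedAddCommGroup E] [InnerProductSpace ℂ E]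
variable {F : Type*} [NormedAddCommGroup F] [InnerProductSpace ℂ F] [CompleteSpace F]

variable (a : E → (F →L[ℂ] F))

/-- product of the `a fᵢ`. -/
def op (L : List E) : F →L[ℂ] F := (L.map a).prod

@[simp] lemma op_nil : op a ([] : List E) = 1 := rfl

@[simp] lemma op_cons (f : E) (L : List E) : op a (f :: L) = a f * op a L := by
  simp [op]

lemma op_append (L M : List E) : op a (L ++ M) = op a L * op a M := by
  simp [op]

/-- correction terms from pulling a creation operator through. -/
noncomputable def Rg (g : E) : List E → (F →L[ℂ] F)
  | [] => 0
  | f :: L => (((-1 : ℂ)) ^ L.length * ⟪f, g⟫) • op a L + a f * Rg g L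

variable {a}

lemma pull
    (hmix : ∀ f h : E, a f * adjoint (a h) + adjoint (a h) * a f = (⟪f, h⟫ : ℂ) • 1)
    (g : E) : ∀ L : List E,
    op a L * adjoint (a g)
      = ((-1 : ℂ)) ^ L.length • (adjoint (a g) * op a L) + Rg a g L
  | [] => by simp [Rg]
  | f :: L => by
      have IH := pull hmix g L
      have hfg : a f * adjoint (a g) = (⟪f, g⟫ : ℂ) • 1 - adjoint (a g) * a f := by
        have := hmix f g
        linear_combination (norm := module) this
      calc op a (f :: L) * adjoint (a g) = a f * (op a L * adjoint (a g)) := by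
            simp [mul_assoc]
        _ = a f * (((-1 : ℂ)) ^ L.length • (adjoint (a g) * op a L) + Rg a g L) := by rw [IH]
        _ = ((-1 : ℂ)) ^ L.length • ((a f * adjoint (a g)) * op a L) + a f * Rg a g L := by
            simp [mul_add, mul_smul_comm, mul_assoc]
        _ = ((-1 : ℂ)) ^ L.length • (((⟪f, g⟫ : ℂ) • 1 - adjoint (a g) * a f) * op a L)
              + a f * Rg a g L := by rw [hfg]
        _ = ((-1 : ℂ)) ^ (f :: L).length • (adjoint (a g) * op a (f :: L)) + Rg a g (f :: L) := by
            simp only [Rg, List.length_cons, op_cons, sub_mul, smul_mul_assoc, one_mul,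
              smul_sub, pow_succ, mul_assoc]
            module

variable (Ω : F)

lemma vac_pull
    (hmix : ∀ f h : E, a f * adjoint (a h) + adjoint (a h) * a f = (⟪f, h⟫ : ℂ) • 1)
    {g : E} (hg : a g Ω = 0) (L : List E) :
    ⟪Ω, (op a L * adjoint (a g)) Ω⟫ = ⟪Ω, Rg a g L Ω⟫ := by
  rw [pull hmix g L]
  have h0 : ⟪Ω, adjoint (a g) ((op a L) Ω)⟫ = 0 := by
    rw [ContinuousLinearMap.adjoint_inner_right, hg, inner_zero_left]
  simp [inner_add_right, inner_smul_right, h0]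

lemma Rvac (g : E) :
    ∀ L K : List E, (∀ M : List E, M.length + 1 = K.length + L.length → ⟪Ω, op a M Ω⟫ = 0) →
    ⟪Ω, (op a K * Rg a g L) Ω⟫ = 0
  | [], K, _ => by simp [Rg]
  | f :: L, K, h => by
      have h1 : ⟪Ω, op a (K ++ L) Ω⟫ = 0 := h _ (by simp [List.length_append]; omega)
      have h2 : ⟪Ω, (op a (K ++ [f]) * Rg a g L) Ω⟫ = 0 := by
        refine Rvac g L (K ++ [f]) fun M hM => h M ?_
        simp only [List.length_append, List.length_cons, List.length_nil] at hM ⊢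
        omega
      rw [op_append] at h1
      have e1 : op a K * Rg a g (f :: L)
          = (((-1 : ℂ)) ^ L.length * ⟪f, g⟫) • (op a K * op a L)
            + op a (K ++ [f]) * Rg a g L := by
        simp [Rg, mul_add, mul_smul_comm, op_append, mul_assoc]
      rw [e1]
      simp only [ContinuousLinearMap.add_apply, inner_add_right,
        ContinuousLinearMap.smul_apply, inner_smul_right, h1, h2, mul_zero, add_zero]

/-- odd correlation functions vanish. -/
lemma odd_vanish
    (hmix : ∀ f h : E, a f * adjoint (a h) + adjoint (a h) * a f = (⟪f, h⟫ : ℂ) • 1)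
    (hsplit : ∀ f : E, ∃ g g' : E, a g Ω = 0 ∧ a g' Ω = 0 ∧ a f = a g + adjoint (a g')) :
    ∀ n : ℕ, ∀ L : List E, L.length = n → Odd n → ⟪Ω, op a L Ω⟫ = 0 := by
  intro n
  induction n using Nat.strong_induction_on with
  | _ n IH =>
    intro L hL hodd
    rcases List.eq_nil_or_concat L with rfl | ⟨K, f, rfl⟩
    · rw [List.length_nil] at hL
      rw [← hL] at hodd
      simp [Nat.odd_iff] at hodd
    · rw [List.concat_eq_append] at *
      obtain ⟨g, g', hg, hg', hf⟩ := hsplit f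
      have hlen : K.length + 1 = n := by simpa using hL
      have : op a (K ++ [f]) = op a K * a g + op a K * adjoint (a g') := by
        rw [op_append]; simp [op, hf, mul_add]
      rw [this]
      have t1 : ⟪Ω, (op a K * a g) Ω⟫ = 0 := by
        rw [ContinuousLinearMap.mul_apply, hg, map_zero, inner_zero_right]
      have t2 : ⟪Ω, (op a K * adjoint (a g')) Ω⟫ = 0 := by
        rw [vac_pull Ω hmix hg' K]
        have := Rvac (a := a) Ω g' K [] ?_
        · simpa using this
        · intro M hM
          simp only [List.length_nil, Nat.zero_add] at hM
          refine IH M.length (by omega) M rfl ?_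
          obtain ⟨k, hk⟩ := hodd
          exact ⟨k - 1, by omega⟩
      rw [ContinuousLinearMap.add_apply, inner_add_right, t1, t2, add_zero]

lemma adjoint_op (Γ : E → E) (hstar : ∀ f, adjoint (a f) = a (Γ f)) :
    ∀ L : List E, adjoint (op a L) = op a (L.reverse.map Γ)
  | [] => by
      simp only [op_nil, List.reverse_nil, List.map_nil]
      rw [← ContinuousLinearMap.star_eq_adjoint, star_one]
  | f :: L => by
      rw [op_cons, ContinuousLinearMap.mul_def, ContinuousLinearMap.adjoint_comp,
        adjoint_op Γ hstar L, hstar]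
      have h2 : (f :: L).reverse.map Γ = L.reverse.map Γ ++ [Γ f] := by simp
      rw [h2, op_append]
      simp [op, ContinuousLinearMap.mul_def]

end TomitaAux

open TomitaAux

section Main

variable {E : Type*} [NormedAddCommGroup E] [InnerProductSpace ℂ E]
    {F : Type*} [NormedAddCommGroup F] [InnerProductSpace ℂ F] [CompleteSpace F]

/-- The grading (Klein) operator exists: a self-adjoint `U` with `UΩ = Ω` and
`a f ∘ U = - U ∘ a f`. -/
theorem exists_klein (Γ : E → E) (hΓ_inv : ∀ x, Γ (Γ x) = x)
    (P : E →L[ℂ] E) (hP_proj : P ∘L P = P) (hP_basis : ∀ x, P x + Γ (P (Γ x)) = x)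
    (a : E → (F →L[ℂ] F)) (Ω : F)
    (ha_add : ∀ f g, a (f + g) = a f + a g)
    (ha_star : ∀ f, ContinuousLinearMap.adjoint (a f) = a (Γ f))
    (hCAR : ∀ f h : E, a f ∘L ContinuousLinearMap.adjoint (a h)
      + ContinuousLinearMap.adjoint (a h) ∘L a f = (⟪f, h⟫ : ℂ) • (1 : F →L[ℂ] F))
    (hvac : ∀ f : E, P f = f → a f Ω = 0)
    (hcyc : ∀ K : Submodule ℂ F, IsClosed (K : Set F) → Ω ∈ K →
      (∀ f : E, ∀ x ∈ K, a f x ∈ K) → K = ⊤) :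
    ∃ U : F →L[ℂ] F, ContinuousLinearMap.adjoint U = U ∧ U Ω = Ω ∧
      (∀ f : E, a f * U = -(U * a f)) ∧
      (∀ f : E, U (a f Ω) = -(a f Ω)) := by
  have hmix : ∀ f h : E, a f * adjoint (a h) + adjoint (a h) * a f = (⟪f, h⟫ : ℂ) • 1 := by
    intro f h
    have := hCAR f h
    rwa [← ContinuousLinearMap.mul_def, ← ContinuousLinearMap.mul_def] at this
  have hPP : ∀ f : E, P (P f) = P f := fun f => by
    have := ContinuousLinearMap.ext_iff.mp hP_proj f
    simpa using this
  have hsplit : ∀ f : E, ∃ g g' : E, a g Ω = 0 ∧ a g' Ω = 0 ∧ a f = a g + adjoint (a g') := by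
    intro f
    refine ⟨P f, P (Γ f), hvac _ (hPP f), hvac _ (hPP (Γ f)), ?_⟩
    rw [ha_star]
    conv_lhs => rw [← hP_basis f]
    rw [ha_add]
  have hodd := odd_vanish Ω hmix hsplit
  have hgen : ∀ L M : List E, Odd (L.length + M.length) → ⟪op a L Ω, op a M Ω⟫ = 0 := by
    intro L M h
    have e1 : ⟪op a L Ω, op a M Ω⟫ = ⟪Ω, adjoint (op a L) (op a M Ω)⟫ :=
      (ContinuousLinearMap.adjoint_inner_right _ _ _).symm
    rw [e1, adjoint_op Γ ha_star L]
    have e2 : op a (L.reverse.map Γ) ((op a M) Ω) = op a (L.reverse.map Γ ++ M) Ω := by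
      rw [op_append]; rfl
    rw [e2]
    exact hodd _ _ rfl (by simpa using h)
  set Sp : Submodule ℂ F :=
    (Submodule.span ℂ {x | ∃ L : List E, Even L.length ∧ x = op a L Ω}).topologicalClosure
    with hSp
  set Sm : Submodule ℂ F :=
    (Submodule.span ℂ {x | ∃ L : List E, Odd L.length ∧ x = op a L Ω}).topologicalClosure
    with hSm
  haveI : CompleteSpace Sp := by rw [hSp]; infer_instance
  haveI : CompleteSpace Sm := by rw [hSm]; infer_instance
  have hSpc : IsClosed (Sp : Set F) := by rw [hSp]; exact Submodule.isClosed_topologicalClosure _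
  have hSmc : IsClosed (Sm : Set F) := by rw [hSm]; exact Submodule.isClosed_topologicalClosure _
  have hmap : ∀ (T : F →L[ℂ] F) (s : Set F) (N : Submodule ℂ F), IsClosed (N : Set F) →
      (∀ y ∈ s, T y ∈ N) → ∀ x ∈ (Submodule.span ℂ s).topologicalClosure, T x ∈ N := by
    intro T s N hNc hTs x hx
    have hc : IsClosed ((N.comap (T : F →ₗ[ℂ] F) : Submodule ℂ F) : Set F) := by
      rw [Submodule.comap_coe]
      exact hNc.preimage T.continuous
    have h1 : (Submodule.span ℂ s).topologicalClosure ≤ N.comap (T : F →ₗ[ℂ] F) :=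
      Submodule.topologicalClosure_minimal _ (Submodule.span_le.mpr hTs) hc
    exact h1 hx
  have hΩp : Ω ∈ Sp :=
    Submodule.le_topologicalClosure _ (Submodule.subset_span ⟨[], by simp, by simp [op]⟩)
  have hafSp : ∀ f : E, ∀ x ∈ Sp, a f x ∈ Sm := by
    intro f x hx
    rw [hSp] at hx
    refine hmap (a f) _ _ hSmc ?_ x hx
    rintro y ⟨L, hL, rfl⟩
    exact Submodule.le_topologicalClosure _
      (Submodule.subset_span ⟨f :: L, by simpa using hL.add_one, by simp⟩)
  have hafSm : ∀ f : E, ∀ x ∈ Sm, a f x ∈ Sp := by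
    intro f x hx
    rw [hSm] at hx
    refine hmap (a f) _ _ hSpc ?_ x hx
    rintro y ⟨L, hL, rfl⟩
    exact Submodule.le_topologicalClosure _
      (Submodule.subset_span ⟨f :: L, by simpa using hL.add_one, by simp⟩)
  have hSmSp : Sm ≤ Spᗮ := by
    rw [hSm]
    refine Submodule.topologicalClosure_minimal _ (Submodule.span_le.mpr ?_)
      (Submodule.isClosed_orthogonal _)
    rintro y ⟨M, hM, rfl⟩
    rw [SetLike.mem_coe, Submodule.mem_orthogonal]
    intro u hu
    have h2 : Sp ≤ (ℂ ∙ (op a M Ω))ᗮ := by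
      rw [hSp]
      refine Submodule.topologicalClosure_minimal _ (Submodule.span_le.mpr ?_)
        (Submodule.isClosed_orthogonal _)
      rintro x ⟨L, hL, rfl⟩
      rw [SetLike.mem_coe, Submodule.mem_orthogonal_singleton_iff_inner_right]
      exact hgen M L (hM.add_even hL)
    have h3 := Submodule.mem_orthogonal_singleton_iff_inner_right.mp (h2 hu)
    rwa [inner_eq_zero_symm] at h3
  set K0 : Submodule ℂ F := Submodule.span ℂ {x | ∃ L : List E, x = op a L Ω} with hK0
  have hK0top : K0.topologicalClosure = ⊤ := by
    refine hcyc _ (Submodule.isClosed_topologicalClosure _) ?_ ?_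
    · exact Submodule.le_topologicalClosure _ (Submodule.subset_span ⟨[], by simp [op]⟩)
    · intro f x hx
      refine hmap (a f) _ _ (Submodule.isClosed_topologicalClosure _) ?_ x hx
      rintro y ⟨L, rfl⟩
      exact Submodule.le_topologicalClosure _ (Submodule.subset_span ⟨f :: L, by simp⟩)
  have hK0sup : K0 ≤ Sp ⊔ Sm := by
    rw [hK0, Submodule.span_le]
    rintro y ⟨L, rfl⟩
    rcases Nat.even_or_odd L.length with h | h
    · exact Submodule.mem_sup_left (Submodule.le_topologicalClosure _
        (Submodule.subset_span ⟨L, h, rfl⟩))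
    · exact Submodule.mem_sup_right (Submodule.le_topologicalClosure _
        (Submodule.subset_span ⟨L, h, rfl⟩))
  have hsuptop : (Sp ⊔ Sm).topologicalClosure = ⊤ := by
    have h1 : K0.topologicalClosure ≤ (Sp ⊔ Sm).topologicalClosure :=
      Submodule.topologicalClosure_mono hK0sup
    rw [hK0top] at h1
    exact top_le_iff.mp h1
  have hbot : Spᗮ ⊓ Smᗮ = ⊥ := by
    rw [Submodule.inf_orthogonal]
    exact Submodule.topologicalClosure_eq_top_iff.mp hsuptop
  have hSpo : Spᗮ = Sm := by
    refine le_antisymm ?_ hSmSp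
    intro x hx
    have hsub := Submodule.sub_starProjection_mem_orthogonal (K := Sm) x
    have hy : (Submodule.orthogonalProjection Sm x : F) ∈ Spᗮ := hSmSp (Submodule.orthogonalProjection Sm x).2
    have hmem : x - Submodule.orthogonalProjection Sm x ∈ Spᗮ ⊓ Smᗮ :=
      ⟨Submodule.sub_mem _ hx hy, hsub⟩
    rw [hbot, Submodule.mem_bot, sub_eq_zero] at hmem
    rw [hmem]
    exact (Submodule.orthogonalProjection Sm x).2
  set Q : F →L[ℂ] F := Sp.subtypeL ∘L Submodule.orthogonalProjection Sp with hQ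
  set U : F →L[ℂ] F := (2 : ℂ) • Q - 1 with hU
  have hQp : ∀ x ∈ Sp, Q x = x := by
    intro x hx
    show (Sp.subtypeL ∘L Submodule.orthogonalProjection Sp) x = x
    exact Submodule.starProjection_eq_self_iff.mpr hx
  have hQm : ∀ x ∈ Sm, Q x = 0 := by
    intro x hx
    rw [← hSpo] at hx
    show (Sp.subtypeL ∘L Submodule.orthogonalProjection Sp) x = 0
    simp [Submodule.orthogonalProjectionOnto_apply_of_mem_orthogonal hx]
  have hUp : ∀ x ∈ Sp, U x = x := by
    intro x hx
    rw [hU]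
    simp [hQp x hx, two_smul]
  have hUm : ∀ x ∈ Sm, U x = -x := by
    intro x hx
    rw [hU]
    simp [hQm x hx]
  have hUsa : adjoint U = U := by
    rw [← ContinuousLinearMap.star_eq_adjoint, hU, star_sub, star_smul, star_one]
    rw [show star Q = Q from (isSelfAdjoint_starProjection Sp : star Q = Q)]
    norm_num
  have hUΩ : U Ω = Ω := hUp Ω hΩp
  have honep : ∀ f : E, a f Ω ∈ Sm := fun f =>
    Submodule.le_topologicalClosure _ (Submodule.subset_span ⟨[f], ⟨0, rfl⟩, by simp [op]⟩)
  have hanti : ∀ f : E, a f * U = -(U * a f) := by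
    intro f
    set A : F →L[ℂ] F := a f * U + U * a f with hA
    have hAz : ∀ x ∈ Sp ⊔ Sm, A x = 0 := by
      intro x hx
      obtain ⟨y, hy, z, hz, rfl⟩ := Submodule.mem_sup.mp hx
      have hy' : A y = 0 := by
        have h1 : U y = y := hUp y hy
        have h2 : U (a f y) = -(a f y) := hUm _ (hafSp f y hy)
        simp [hA, ContinuousLinearMap.mul_apply, h1, h2]
      have hz' : A z = 0 := by
        have h1 : U z = -z := hUm z hz
        have h2 : U (a f z) = a f z := hUp _ (hafSm f z hz)
        simp [hA, ContinuousLinearMap.mul_apply, h1, h2]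
      rw [map_add, hy', hz', add_zero]
    have hle : (Sp ⊔ Sm).topologicalClosure ≤ LinearMap.ker (A : F →ₗ[ℂ] F) :=
      Submodule.topologicalClosure_minimal _
        (fun x hx => LinearMap.mem_ker.mpr (hAz x hx))
        (ContinuousLinearMap.isClosed_ker A)
    rw [hsuptop] at hle
    have hA0 : A = 0 := by
      ext x
      exact LinearMap.mem_ker.mp (hle Submodule.mem_top)
    rw [hA] at hA0
    exact eq_neg_of_add_eq_zero_left hA0
  exact ⟨U, hUsa, hUΩ, hanti, fun f => hUm _ (honep f)⟩

end Main

/-- Lemma 3.3 (`Lem.3.3`): let `S`, `T` be the Tomita operators of `(M(𝔮), Ω)` and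
`(M(𝔮ᗮ), Ω)` respectively. Then for `q ∈ 𝔮` and `q⊥ ∈ 𝔮ᗮ`:
(i) `S(Pq) = PΓq`; (ii) `T(Pq⊥) = PΓq⊥ = −S*(Pq⊥)`.
Here the one-particle vector `Pf ∈ F` is realized as `a(Γf)Ω` (indeed `a(f)Ω = PΓf`),
`S` is the closure of `MΩ ↦ M*Ω` (`M ∈ M(𝔮)`), so its graph is the closure of
`{(MΩ, M*Ω) : M ∈ M(𝔮)}`, and the anti-linear adjoint `S*` satisfies
`⟪S*x, MΩ⟫ = ⟪M*Ω, x⟫`. -/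
theorem tomita_operator_one_particle
    {E : Type*} [NormedAddCommGroup E] [InnerProductSpace ℂ E] [CompleteSpace E]
    {F : Type*} [NormedAddCommGroup F] [InnerProductSpace ℂ F] [CompleteSpace F]
    (Γ : E → E)
    (hΓ_add : ∀ x y, Γ (x + y) = Γ x + Γ y)
    (hΓ_smul : ∀ (c : ℂ) (x : E), Γ (c • x) = (starRingEnd ℂ) c • Γ x)
    (hΓ_inner : ∀ f h : E, ⟪Γ f, Γ h⟫ = ⟪h, f⟫)
    (hΓ_inv : ∀ x, Γ (Γ x) = x)
    (P : E →L[ℂ] E) (hP_proj : P ∘L P = P) (hP_sa : IsSelfAdjoint P)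
    (hP_basis : ∀ x, P x + Γ (P (Γ x)) = x)
    -- the Fock representation `f ↦ a(f)` of `CAR(𝔥,Γ)` on `F` with vacuum `Ω`
    (a : E → (F →L[ℂ] F)) (Ω : F) (hΩ : ‖Ω‖ = 1)
    (ha_add : ∀ f g, a (f + g) = a f + a g)
    (ha_smul : ∀ (c : ℂ) (f : E), a (c • f) = (starRingEnd ℂ) c • a f)
    (ha_star : ∀ f, ContinuousLinearMap.adjoint (a f) = a (Γ f))
    (hCAR : ∀ f h : E, a f ∘L ContinuousLinearMap.adjoint (a h)
      + ContinuousLinearMap.adjoint (a h) ∘L a f = (⟪f, h⟫ : ℂ) • (1 : F →L[ℂ] F))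
    (hvac : ∀ f : E, P f = f → a f Ω = 0)
    (hcyc : ∀ K : Submodule ℂ F, IsClosed (K : Set F) → Ω ∈ K →
      (∀ f : E, ∀ x ∈ K, a f x ∈ K) → K = ⊤)
    -- the closed `Γ`-invariant subspace `𝔮`, with `P𝔮` and `P𝔮ᗮ` dense in `𝔭`
    (𝔮 : Submodule ℂ E) (h𝔮_closed : IsClosed (𝔮 : Set E))
    (h𝔮Γ : ∀ q ∈ 𝔮, Γ q ∈ 𝔮)
    (hdense1 : closure (P '' (𝔮 : Set E)) = (LinearMap.range (P : E →ₗ[ℂ] E) : Set E))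
    (hdense2 : closure (P '' (𝔮ᗮ : Set E)) = (LinearMap.range (P : E →ₗ[ℂ] E) : Set E)) :
    -- (i)  S(Pq) = PΓq  (with `Pq = a(Γq)Ω` and `PΓq = a(q)Ω` as vectors of `F`)
    (∀ q ∈ 𝔮, (a (Γ q) Ω, a q Ω) ∈ closure
      {z : F × F | ∃ m ∈ Set.centralizer (Set.centralizer
          {T : F →L[ℂ] F | ∃ q' ∈ 𝔮, T = a q'}),
        z = (m Ω, (ContinuousLinearMap.adjoint m) Ω)}) ∧
    -- (ii)  T(Pq⊥) = PΓq⊥ …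
    (∀ q' ∈ 𝔮ᗮ, (a (Γ q') Ω, a q' Ω) ∈ closure
      {z : F × F | ∃ m ∈ Set.centralizer (Set.centralizer
          {T : F →L[ℂ] F | ∃ q'' ∈ 𝔮ᗮ, T = a q''}),
        z = (m Ω, (ContinuousLinearMap.adjoint m) Ω)}) ∧
    -- … and  −S*(Pq⊥) = PΓq⊥, i.e. (Pq⊥, −PΓq⊥) belongs to the graph of `S*`
    (∀ q' ∈ 𝔮ᗮ, ∀ m ∈ Set.centralizer (Set.centralizer
          {T : F →L[ℂ] F | ∃ q'' ∈ 𝔮, T = a q''}),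
      ⟪-(a q' Ω), m Ω⟫ = ⟪(ContinuousLinearMap.adjoint m) Ω, a (Γ q') Ω⟫) := by
  have h𝔮Γo : ∀ x ∈ 𝔮ᗮ, Γ x ∈ 𝔮ᗮ := by
    intro x hx
    rw [Submodule.mem_orthogonal]
    intro u hu
    have h1 : ⟪Γ x, Γ (Γ u)⟫ = ⟪Γ u, x⟫ := hΓ_inner x (Γ u)
    rw [hΓ_inv] at h1
    have h2 : ⟪Γ u, x⟫ = 0 := (Submodule.mem_orthogonal 𝔮 x).mp hx (Γ u) (h𝔮Γ u hu)
    rw [h2] at h1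
    rw [inner_eq_zero_symm]
    exact h1
  obtain ⟨U, hUsa, hUΩ, hanti, hUone⟩ :=
    exists_klein Γ hΓ_inv P hP_proj hP_basis a Ω ha_add ha_star hCAR hvac hcyc
  refine ⟨?_, ?_, ?_⟩
  · intro q hq
    apply subset_closure
    refine ⟨a (Γ q), Set.subset_centralizer_centralizer ⟨Γ q, h𝔮Γ q hq, rfl⟩, ?_⟩
    rw [ha_star, hΓ_inv]
  · intro q' hq'
    apply subset_closure
    refine ⟨a (Γ q'), Set.subset_centralizer_centralizer ⟨Γ q', h𝔮Γo q' hq', rfl⟩, ?_⟩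
    rw [ha_star, hΓ_inv]
  · intro q' hq' m hm
    set Z : F →L[ℂ] F := a (Γ q') * U with hZ
    have hZcent : Z ∈ Set.centralizer {T : F →L[ℂ] F | ∃ q'' ∈ 𝔮, T = a q''} := by
      rintro T ⟨q, hq, rfl⟩
      have h1 := hCAR q (Γ (Γ q'))
      rw [ha_star (Γ (Γ q'))] at h1
      simp only [hΓ_inv] at h1
      have hz : (⟪q, q'⟫ : ℂ) = 0 := (Submodule.mem_orthogonal 𝔮 q').mp hq' q hq
      rw [hz, zero_smul, ← ContinuousLinearMap.mul_def, ← ContinuousLinearMap.mul_def] at h1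
      have hqg : a q * a (Γ q') = -(a (Γ q') * a q) := eq_neg_of_add_eq_zero_left h1
      show a q * Z = Z * a q
      rw [hZ]
      calc a q * (a (Γ q') * U) = (a q * a (Γ q')) * U := by rw [mul_assoc]
        _ = (-(a (Γ q') * a q)) * U := by rw [hqg]
        _ = -(a (Γ q') * (a q * U)) := by rw [neg_mul, mul_assoc]
        _ = -(a (Γ q') * (-(U * a q))) := by rw [hanti q]
        _ = (a (Γ q') * U) * a q := by rw [mul_neg, neg_neg, mul_assoc]
    have hZm : Z * m = m * Z := hm Z hZcent
    have hZΩ : Z Ω = a (Γ q') Ω := by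
      rw [hZ, ContinuousLinearMap.mul_apply, hUΩ]
    have hZadjΩ : ContinuousLinearMap.adjoint Z Ω = -(a q' Ω) := by
      rw [hZ, ContinuousLinearMap.mul_def, ContinuousLinearMap.adjoint_comp, hUsa,
        ha_star, hΓ_inv, ContinuousLinearMap.comp_apply]
      exact hUone q'
    calc ⟪-(a q' Ω), m Ω⟫ = ⟪ContinuousLinearMap.adjoint Z Ω, m Ω⟫ := by rw [hZadjΩ]
      _ = ⟪Ω, Z (m Ω)⟫ := ContinuousLinearMap.adjoint_inner_left Z (m Ω) Ω
      _ = ⟪Ω, (Z * m) Ω⟫ := rfl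
      _ = ⟪Ω, (m * Z) Ω⟫ := by rw [hZm]
      _ = ⟪Ω, m (Z Ω)⟫ := rfl
      _ = ⟪ContinuousLinearMap.adjoint m Ω, Z Ω⟫ :=
        (ContinuousLinearMap.adjoint_inner_left m (Z Ω) Ω).symm
      _ = ⟪ContinuousLinearMap.adjoint m Ω, a (Γ q') Ω⟫ := by rw [hZΩ]
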